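/- With x̃₁ = (A_k^T A_k + λI)^{-1} A_k^T b and x̂₁ = (A_k^T A_k + λI)^{-1} A^T b, the Pythagorean identity ||x̂₁||_2^2 = ||x̃₁||_2^2 + λ^{-2}||Â_k^T b||_2^2 holds; in particular ||x̃₁||_2 ≤ ||x̂₁||_2. -/

import Mathlib

open Matrix

/-- Euclidean (ℓ2) norm of a finite real vector. -/
noncomputable def enorm₂ {n : ℕ} (v : Fin n → ℝ) : ℝ :=
  Real.sqrt (∑ i, v i ^ 2)

lemma enorm_sq {n : ℕ} (v : Fin n → ℝ) : enorm₂ v ^ 2 = v ⬝ᵥ v := by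
  rw [enorm₂, Real.sq_sqrt (Finset.sum_nonneg fun i _ => sq_nonneg _)]
  simp [dotProduct, sq]

lemma enorm_nonneg' {n : ℕ} (v : Fin n → ℝ) : 0 ≤ enorm₂ v := Real.sqrt_nonneg _

lemma dot_mulVec_mulVec {m n : ℕ} (P Q : Matrix (Fin n) (Fin m) ℝ) (b : Fin m → ℝ) :
    (P *ᵥ b) ⬝ᵥ (Q *ᵥ b) = b ⬝ᵥ ((Pᵀ * Q) *ᵥ b) := by
  rw [dotProduct_mulVec, dotProduct_mulVec, ← vecMul_vecMul, vecMul_transpose]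

/-- With `x̃₁ = (A_kᵀA_k + λI)⁻¹ A_kᵀ b` and `x̂₁ = (A_kᵀA_k + λI)⁻¹ Aᵀ b`,
the Pythagorean identity `‖x̂₁‖₂² = ‖x̃₁‖₂² + λ⁻²‖Â_kᵀ b‖₂²` holds, where
`Â_k = A - A_k`; in particular `‖x̃₁‖₂ ≤ ‖x̂₁‖₂`. -/
theorem stmt14 (m n k l : ℕ)
    (Uk : Matrix (Fin m) (Fin k) ℝ) (Vk : Matrix (Fin n) (Fin k) ℝ)
    (Uh : Matrix (Fin m) (Fin l) ℝ) (Vh : Matrix (Fin n) (Fin l) ℝ)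
    (σ : Fin k → ℝ) (τ : Fin l → ℝ)
    (hσ : ∀ s, 0 < σ s) (hτ : ∀ s, 0 < τ s)
    (hUk : Ukᵀ * Uk = 1) (hVk : Vkᵀ * Vk = 1)
    (hUO : Ukᵀ * Uh = 0) (hVO : Vkᵀ * Vh = 0)
    (lam : ℝ) (hlam : 0 < lam)
    (A : Matrix (Fin m) (Fin n) ℝ)
    (hA : A = Uk * Matrix.diagonal σ * Vkᵀ + Uh * Matrix.diagonal τ * Vhᵀ)
    (Ak : Matrix (Fin m) (Fin n) ℝ)
    (hAk : Ak = Uk * Matrix.diagonal σ * Vkᵀ)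
    (b : Fin m → ℝ) :
    (enorm₂ (((Akᵀ * Ak + lam • (1 : Matrix (Fin n) (Fin n) ℝ))⁻¹).mulVec (Aᵀ.mulVec b))) ^ 2 =
      (enorm₂ (((Akᵀ * Ak + lam • (1 : Matrix (Fin n) (Fin n) ℝ))⁻¹).mulVec (Akᵀ.mulVec b))) ^ 2 +
        lam⁻¹ ^ 2 * (enorm₂ ((A - Ak)ᵀ.mulVec b)) ^ 2 ∧
    enorm₂ (((Akᵀ * Ak + lam • (1 : Matrix (Fin n) (Fin n) ℝ))⁻¹).mulVec (Akᵀ.mulVec b)) ≤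
      enorm₂ (((Akᵀ * Ak + lam • (1 : Matrix (Fin n) (Fin n) ℝ))⁻¹).mulVec (Aᵀ.mulVec b)) := by
  set M : Matrix (Fin n) (Fin n) ℝ := Akᵀ * Ak + lam • (1 : Matrix (Fin n) (Fin n) ℝ) with hM
  -- positive definiteness of M
  have h1 : (Akᵀ * Ak).PosSemidef := by
    simpa using Matrix.posSemidef_conjTranspose_mul_self Ak
  have hsm : (lam • (1 : Matrix (Fin n) (Fin n) ℝ)).PosDef := by
    exact Matrix.PosDef.one.smul hlam
  have hMpd : M.PosDef := Matrix.PosDef.posSemidef_add h1 hsm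
  have hU : IsUnit M.det := hMpd.det_pos.ne'.isUnit
  have hMl : M⁻¹ * M = 1 := Matrix.nonsing_inv_mul M hU
  have hMt : Mᵀ = M := by
    rw [hM]
    simp [Matrix.transpose_add, Matrix.transpose_mul, Matrix.transpose_smul]
  have hinvT : (M⁻¹)ᵀ = M⁻¹ := by rw [Matrix.transpose_nonsing_inv, hMt]
  -- A - Ak and orthogonality
  have hAm : A - Ak = Uh * Matrix.diagonal τ * Vhᵀ := by
    rw [hA, hAk, add_sub_cancel_left]
  have hz : Ak * (A - Ak)ᵀ = 0 := by
    rw [hAm, hAk, Matrix.transpose_mul, Matrix.transpose_mul, Matrix.transpose_transpose,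
      Matrix.diagonal_transpose]
    have h0 : Vkᵀ * (Vh * (Matrix.diagonal τ * Uhᵀ)) = 0 := by
      rw [← Matrix.mul_assoc, hVO, Matrix.zero_mul]
    simp only [Matrix.mul_assoc, h0, Matrix.mul_zero]
  have hMA : M * (A - Ak)ᵀ = lam • (A - Ak)ᵀ := by
    rw [hM, Matrix.add_mul, Matrix.mul_assoc, hz, Matrix.mul_zero, zero_add,
      Matrix.smul_mul, Matrix.one_mul]
  have hinvA : M⁻¹ * (A - Ak)ᵀ = lam⁻¹ • (A - Ak)ᵀ := by
    have h2 : (A - Ak)ᵀ = lam • (M⁻¹ * (A - Ak)ᵀ) := by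
      calc (A - Ak)ᵀ = (M⁻¹ * M) * (A - Ak)ᵀ := by rw [hMl, Matrix.one_mul]
        _ = M⁻¹ * (lam • (A - Ak)ᵀ) := by rw [Matrix.mul_assoc, hMA]
        _ = lam • (M⁻¹ * (A - Ak)ᵀ) := by rw [Matrix.mul_smul]
      -- done
    rw [eq_comm]
    calc lam⁻¹ • (A - Ak)ᵀ = lam⁻¹ • (lam • (M⁻¹ * (A - Ak)ᵀ)) := by rw [← h2]
      _ = M⁻¹ * (A - Ak)ᵀ := by rw [smul_smul, inv_mul_cancel₀ hlam.ne', one_smul]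
  -- vectors
  set x : Fin n → ℝ := M⁻¹ *ᵥ (Akᵀ *ᵥ b) with hx
  set w : Fin n → ℝ := (A - Ak)ᵀ *ᵥ b with hw
  have hsplit : M⁻¹ *ᵥ (Aᵀ *ᵥ b) = x + lam⁻¹ • w := by
    have hAT : Aᵀ = Akᵀ + (A - Ak)ᵀ := by rw [← Matrix.transpose_add]; congr 1; simp
    rw [hAT, Matrix.add_mulVec, Matrix.mulVec_add, hx, hw]
    congr 1
    rw [Matrix.mulVec_mulVec, hinvA, Matrix.smul_mulVec]
  have horth : x ⬝ᵥ w = 0 := by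
    rw [hx, hw, Matrix.mulVec_mulVec, dot_mulVec_mulVec]
    have : (M⁻¹ * Akᵀ)ᵀ * (A - Ak)ᵀ = 0 := by
      rw [Matrix.transpose_mul, Matrix.transpose_transpose, hinvT, Matrix.mul_assoc,
        hinvA, Matrix.mul_smul, hz, smul_zero]
    rw [this, Matrix.zero_mulVec, dotProduct_zero]
  have horth' : w ⬝ᵥ x = 0 := by rw [dotProduct_comm]; exact horth
  -- Pythagorean identity
  have hpy : enorm₂ (M⁻¹ *ᵥ (Aᵀ *ᵥ b)) ^ 2 = enorm₂ x ^ 2 + lam⁻¹ ^ 2 * enorm₂ w ^ 2 := by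
    rw [hsplit, enorm_sq, enorm_sq, enorm_sq]
    simp only [dotProduct_add, add_dotProduct, smul_dotProduct, dotProduct_smul,
      horth, horth', smul_eq_mul, mul_zero, add_zero, zero_add]
    ring
  refine ⟨hpy, ?_⟩
  have hle : enorm₂ x ^ 2 ≤ enorm₂ (M⁻¹ *ᵥ (Aᵀ *ᵥ b)) ^ 2 := by
    rw [hpy]
    have : 0 ≤ lam⁻¹ ^ 2 * enorm₂ w ^ 2 := by positivity
    linarith
  calc enorm₂ x = Real.sqrt (enorm₂ x ^ 2) := (Real.sqrt_sq (enorm_nonneg' x)).symm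
    _ ≤ Real.sqrt (enorm₂ (M⁻¹ *ᵥ (Aᵀ *ᵥ b)) ^ 2) := Real.sqrt_le_sqrt hle
    _ = enorm₂ (M⁻¹ *ᵥ (Aᵀ *ᵥ b)) := Real.sqrt_sq (enorm_nonneg' _)
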